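/- The Bohl algebra B is not a Noetherian ring. -/

import Mathlib

open Complex

noncomputable section

/-- The Bohl algebra: the subalgebra of functions `ℝ → ℂ` (pointwise operations)
spanned over `ℂ` by the functions `t ↦ t^k * exp (λ * t)`, `k ∈ ℕ`, `λ ∈ ℂ`. -/
def Bohl : Subalgebra ℂ (ℝ → ℂ) :=
  Algebra.adjoin ℂ
    {g : ℝ → ℂ | ∃ (k : ℕ) (l : ℂ), g = fun t : ℝ => (t : ℂ) ^ k * Complex.exp (l * t)}

namespace BohlAux

lemma expMem (l : ℂ) : (fun t : ℝ => Complex.exp (l * t)) ∈ Bohl := by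
  apply Algebra.subset_adjoin
  exact ⟨0, l, by funext t; simp⟩

/-- The exponential `t ↦ exp (l t)` as an element of the Bohl algebra. -/
def e (l : ℂ) : Bohl := ⟨fun t : ℝ => Complex.exp (l * t), expMem l⟩

/-- The element `exp ((1/2)^n t) - 1` of the Bohl algebra. -/
def a (n : ℕ) : Bohl := e (((1 / 2 : ℝ) ^ n : ℝ) : ℂ) - 1

lemma a_apply (n : ℕ) (t : ℝ) :
    (a n : ℝ → ℂ) t = Complex.exp ((((1 / 2 : ℝ) ^ n : ℝ) : ℂ) * t) - 1 := rfl

lemma a_factor (n : ℕ) :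
    a n = a (n + 1) * (e (((1 / 2 : ℝ) ^ (n + 1) : ℝ) : ℂ) + 1) := by
  apply Subtype.ext
  funext t
  have hcast : (((1 / 2 : ℝ) ^ n : ℝ) : ℂ) * t
      = (((1 / 2 : ℝ) ^ (n + 1) : ℝ) : ℂ) * t + (((1 / 2 : ℝ) ^ (n + 1) : ℝ) : ℂ) * t := by
    push_cast
    ring
  show Complex.exp _ - 1 = (Complex.exp _ - 1) * (Complex.exp _ + 1)
  rw [hcast, Complex.exp_add]
  ring

/-- Every element of the Bohl algebra extends to an entire function. -/
lemma exists_entire {f : ℝ → ℂ} (hf : f ∈ Bohl) :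
    ∃ F : ℂ → ℂ, Differentiable ℂ F ∧ ∀ t : ℝ, F t = f t := by
  induction hf using Algebra.adjoin_induction with
  | mem x hx =>
    obtain ⟨k, l, rfl⟩ := hx
    refine ⟨fun z => z ^ k * Complex.exp (l * z), ?_, fun t => rfl⟩
    exact (differentiable_pow k).mul ((differentiable_id.const_mul l).cexp)
  | algebraMap r =>
    exact ⟨fun _ => r, differentiable_const r, fun t => rfl⟩
  | add x y hx hy ihx ihy =>
    obtain ⟨F, hF, hFx⟩ := ihx
    obtain ⟨G, hG, hGy⟩ := ihy
    exact ⟨F + G, hF.add hG, fun t => by simp [hFx t, hGy t]⟩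
  | mul x y hx hy ihx ihy =>
    obtain ⟨F, hF, hFx⟩ := ihx
    obtain ⟨G, hG, hGy⟩ := ihy
    exact ⟨F * G, hF.mul hG, fun t => by simp [hFx t, hGy t]⟩

lemma not_mem (n : ℕ) : a (n + 1) ∉ Ideal.span {a n} := by
  intro h
  obtain ⟨g, hg⟩ := Ideal.mem_span_singleton'.mp h
  set u : ℝ := (1 / 2 : ℝ) ^ (n + 1) with hu
  have hupos : (0 : ℝ) < u := pow_pos (by norm_num) _
  -- pointwise equation
  have hfun : ∀ t : ℝ, (g : ℝ → ℂ) t * ((a n : ℝ → ℂ) t) = (a (n + 1) : ℝ → ℂ) t := by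
    intro t
    have := congrArg Subtype.val hg
    exact congrFun this t
  -- for positive t, g t * (E + 1) = 1 where E = exp (u t)
  have key : ∀ t : ℝ, 0 < t →
      (g : ℝ → ℂ) t * (Complex.exp ((u : ℂ) * t) + 1) = 1 := by
    intro t ht
    have hE : Complex.exp ((u : ℂ) * t) = ((Real.exp (u * t) : ℝ) : ℂ) := by
      rw [Complex.ofReal_exp]
      push_cast
      ring_nf
    have hE1 : Complex.exp ((u : ℂ) * t) - 1 ≠ 0 := by
      rw [hE]
      intro hcon
      have : ((Real.exp (u * t) : ℝ) : ℂ) = ((1 : ℝ) : ℂ) := by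
        rw [sub_eq_zero] at hcon; exact_mod_cast hcon
      have h2 : Real.exp (u * t) = 1 := by exact_mod_cast this
      have h3 : (1 : ℝ) < Real.exp (u * t) := Real.one_lt_exp_iff.mpr (mul_pos hupos ht)
      rw [h2] at h3
      exact lt_irrefl _ h3
    have hsq : Complex.exp ((((1 / 2 : ℝ) ^ n : ℝ) : ℂ) * t)
        = Complex.exp ((u : ℂ) * t) * Complex.exp ((u : ℂ) * t) := by
      rw [← Complex.exp_add]
      congr 1
      rw [hu]
      push_cast
      ring
    have heq := hfun t
    rw [a_apply, a_apply, hsq] at heq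
    set E : ℂ := Complex.exp ((u : ℂ) * t) with hEdef
    have hfact : (g : ℝ → ℂ) t * (E + 1) * (E - 1) = 1 * (E - 1) := by
      have hexp : (g : ℝ → ℂ) t * (E + 1) * (E - 1) = (g : ℝ → ℂ) t * (E * E - 1) := by ring
      rw [hexp, heq, one_mul]
    exact mul_right_cancel₀ hE1 hfact
  -- extend g to an entire function
  obtain ⟨F, hFdiff, hFeq⟩ := exists_entire g.2
  set G : ℂ → ℂ := fun z => F z * (Complex.exp ((u : ℂ) * z) + 1) - 1 with hGdef
  have hGdiff : Differentiable ℂ G :=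
    (hFdiff.mul ((differentiable_id.const_mul _).cexp.add_const 1)).sub_const 1
  have hGzero : ∀ t : ℝ, 0 < t → G t = 0 := by
    intro t ht
    simp only [hGdef]
    rw [hFeq t, key t ht]
    ring
  -- G vanishes frequently near 1
  have hfreq : ∃ᶠ z in nhdsWithin (1 : ℂ) {(1 : ℂ)}ᶜ, G z = 0 := by
    have hreal : Filter.Tendsto (fun m : ℕ => (1 + 1 / (m + 1) : ℝ)) Filter.atTop (nhds 1) := by
      have := tendsto_one_div_add_atTop_nhds_zero_nat (𝕜 := ℝ)
      have h := this.const_add (1 : ℝ)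
      simpa using h
    have hseq : Filter.Tendsto (fun m : ℕ => ((1 + 1 / (m + 1) : ℝ) : ℂ)) Filter.atTop
        (nhds (1 : ℂ)) := by
      have h2 := (Complex.continuous_ofReal.tendsto (1 : ℝ)).comp hreal
      rw [Complex.ofReal_one] at h2
      exact h2
    have hne : ∀ m : ℕ, ((1 + 1 / (m + 1) : ℝ) : ℂ) ≠ 1 := by
      intro m hcon
      have : (1 + 1 / (m + 1) : ℝ) = 1 := by exact_mod_cast hcon
      have hpos : (0 : ℝ) < 1 / (m + 1) := by positivity
      linarith
    have hseq' : Filter.Tendsto (fun m : ℕ => ((1 + 1 / (m + 1) : ℝ) : ℂ)) Filter.atTop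
        (nhdsWithin (1 : ℂ) {(1 : ℂ)}ᶜ) :=
      tendsto_nhdsWithin_of_tendsto_nhds_of_eventually_within _ hseq
        (Filter.Eventually.of_forall fun m => hne m)
    exact hseq'.frequently (Filter.Frequently.of_forall fun m =>
      hGzero _ (by positivity))
  -- identity theorem: G is identically zero
  have hGanalytic : AnalyticOnNhd ℂ G Set.univ :=
    analyticOnNhd_univ_iff_differentiable.mpr hGdiff
  have hGall : Set.EqOn G 0 Set.univ :=
    hGanalytic.eqOn_zero_of_preconnected_of_frequently_eq_zero isPreconnected_univ
      (Set.mem_univ _) hfreq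
  -- contradiction at z₀ = π I / u
  have hune : (u : ℂ) ≠ 0 := by exact_mod_cast ne_of_gt hupos
  have hz₀ : Complex.exp ((u : ℂ) * ((Real.pi : ℂ) * Complex.I / (u : ℂ))) = -1 := by
    rw [mul_div_cancel₀ _ hune]
    exact Complex.exp_pi_mul_I
  have := hGall (Set.mem_univ ((Real.pi : ℂ) * Complex.I / (u : ℂ)))
  simp only [hGdef, Pi.zero_apply, hz₀] at this
  norm_num at this

end BohlAux

set_option maxHeartbeats 1000000 in
set_option synthInstance.maxHeartbeats 1000000 in
/-- The Bohl algebra is not a Noetherian ring. -/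
theorem bohl_not_noetherian : ¬ IsNoetherianRing Bohl := by
  intro hN
  have hmono : Monotone fun n : ℕ => (Ideal.span {BohlAux.a n} : Ideal Bohl) := by
    apply monotone_nat_of_le_succ
    intro n
    exact Ideal.span_singleton_le_span_singleton.mpr ⟨_, BohlAux.a_factor n⟩
  obtain ⟨n, hn⟩ := (monotone_stabilizes_iff_noetherian.mpr (isNoetherianRing_iff.mp hN))
    ⟨fun n => (Ideal.span {BohlAux.a n} : Ideal Bohl), hmono⟩
  have h1 : (Ideal.span {BohlAux.a (n + 1)} : Ideal Bohl) = Ideal.span {BohlAux.a n} :=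
    (hn (n + 1) (Nat.le_succ n)).symm
  exact BohlAux.not_mem n (h1 ▸ Ideal.mem_span_singleton_self _)
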